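/- Let k ⊆ K be algebraically closed fields, f₁,...,f_m ∈ k[x₁,...,x_n], and suppose g ∈ K[x₁,...,x_n] does not vanish identically on the vanishing set V_K of the f_i in K^n. Then g does not vanish identically on V_k, the vanishing set of the f_i in k^n. (Key step: if A is a finitely generated k-subalgebra of K and 𝔪 ⊆ A is a maximal ideal, then A/𝔪 ≅ k.) -/

import Mathlib

open MvPolynomial

/-- Let `k ⊆ K` be algebraically closed fields, `f 1, ..., f m ∈ k[x₁,...,xₙ]`, and suppose
`g ∈ K[x₁,...,xₙ]` does not vanish identically on the vanishing set `V_K` of the `f i` in `Kⁿ`.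
Then `g` does not vanish identically on `V_k`, the vanishing set of the `f i` in `kⁿ`. -/
theorem stmt_4 (k K : Type*) [Field k] [Field K] [IsAlgClosed k] [IsAlgClosed K]
    [Algebra k K] (n m : ℕ) (f : Fin m → MvPolynomial (Fin n) k)
    (g : MvPolynomial (Fin n) K)
    (hg : ∃ q : Fin n → K, (∀ i, eval q (map (algebraMap k K) (f i)) = 0) ∧ eval q g ≠ 0) :
    ∃ p : Fin n → k, (∀ i, eval p (f i) = 0) ∧
      eval (fun x => algebraMap k K (p x)) g ≠ 0 := by
  by_contra hcon
  push_neg at hcon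
  obtain ⟨q, hq, hgq⟩ := hg
  apply hgq
  set ι : k →+* K := algebraMap k K with hι
  classical
  let B := Module.Basis.ofVectorSpace k K
  -- the "coordinate" polynomials of g, with coefficients in k
  let gl : Module.Basis.ofVectorSpaceIndex k K → MvPolynomial (Fin n) k := fun l =>
    ∑ d ∈ g.support, monomial d (B.repr (coeff d g) l)
  -- each gl l vanishes on V_k
  have hgl0 : ∀ l, ∀ p : Fin n → k, (∀ i, eval p (f i) = 0) → eval p (gl l) = 0 := by
    intro l p hp
    have h0 : eval (fun x => ι (p x)) g = 0 := hcon p hp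
    have hsum : eval (fun x => ι (p x)) g
        = ∑ d ∈ g.support, (∏ i, p i ^ d i) • coeff d g := by
      rw [eval_eq']
      refine Finset.sum_congr rfl fun d _ => ?_
      rw [Algebra.smul_def, mul_comm]
      congr 1
      rw [map_prod]
      exact Finset.prod_congr rfl fun i _ => (map_pow ι (p i) (d i)).symm
    have := congrArg (fun z => B.repr z l) (hsum.symm.trans h0)
    simp only [map_sum, map_zero, Finsupp.coe_smul, map_smul] at this
    have : ∑ d ∈ g.support, (∏ i, p i ^ d i) * (B.repr (coeff d g) l) = 0 := by
      simpa [smul_eq_mul] using this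
    rw [← this]
    simp only [gl, map_sum, eval_monomial, Finsupp.prod_pow]
    exact Finset.sum_congr rfl fun d _ => mul_comm _ _
  -- hence gl l is in the radical of the ideal generated by the f i
  set I : Ideal (MvPolynomial (Fin n) k) := Ideal.span (Set.range f) with hI
  have hglrad : ∀ l, gl l ∈ I.radical := by
    intro l
    rw [← vanishingIdeal_zeroLocus_eq_radical (K := k)]
    intro x hx
    rw [hI, zeroLocus_span] at hx
    exact hgl0 l x (fun i => hx (f i) ⟨i, rfl⟩)
  -- the evaluation homomorphism at q
  set φ : MvPolynomial (Fin n) k →+* K := eval₂Hom ι q with hφ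
  have hφf : ∀ h ∈ I, φ h = 0 := by
    intro h hh
    have : I ≤ RingHom.ker φ := by
      rw [hI, Ideal.span_le]
      rintro _ ⟨i, rfl⟩
      have := hq i
      rw [eval_map] at this
      exact this
    exact this hh
  -- so φ (gl l) = 0
  have hφgl : ∀ l, φ (gl l) = 0 := by
    intro l
    obtain ⟨N, hN⟩ := hglrad l
    have : (φ (gl l)) ^ N = 0 := by rw [← map_pow]; exact hφf _ hN
    exact (pow_eq_zero_iff'.mp this).1
  -- recombine: eval q g = ∑ l, B l * φ (gl l) = 0
  set S : Finset (Module.Basis.ofVectorSpaceIndex k K) :=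
    g.support.biUnion (fun d => (B.repr (coeff d g)).support) with hS
  have hrepr : ∀ d ∈ g.support, coeff d g = ∑ l ∈ S, B.repr (coeff d g) l • B l := by
    intro d hd
    have h1 : ((B.repr (coeff d g)).sum fun l a => a • (B l : K)) = coeff d g := by
      rw [← Finsupp.linearCombination_apply]; exact B.linearCombination_repr _
    exact h1.symm.trans (Finsupp.sum_of_support_subset (B.repr (coeff d g))
      (fun l hl => Finset.mem_biUnion.mpr ⟨d, hd, hl⟩) _ (fun i _ => zero_smul k (B i)))
  calc eval q g = ∑ d ∈ g.support, coeff d g * ∏ i, q i ^ d i := eval_eq' q g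
    _ = ∑ d ∈ g.support, ∑ l ∈ S, (B.repr (coeff d g) l • (B l : K)) * ∏ i, q i ^ d i := by
        refine Finset.sum_congr rfl fun d hd => ?_
        rw [← Finset.sum_mul, ← hrepr d hd]
    _ = ∑ l ∈ S, (B l : K) * ∑ d ∈ g.support, ι (B.repr (coeff d g) l) * ∏ i, q i ^ d i := by
        rw [Finset.sum_comm]
        refine Finset.sum_congr rfl fun l _ => ?_
        rw [Finset.mul_sum]
        refine Finset.sum_congr rfl fun d _ => ?_
        rw [Algebra.smul_def]
        ring
    _ = ∑ l ∈ S, (B l : K) * φ (gl l) := by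
        refine Finset.sum_congr rfl fun l _ => ?_
        congr 1
        simp only [gl, map_sum, hφ, eval₂Hom_monomial]
        exact Finset.sum_congr rfl fun d _ => by rw [Finsupp.prod_pow]
    _ = 0 := by simp [hφgl]
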